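/- For any positive integers m, n and nonnegative integers a_1, ..., a_m, the integer ((a_1+⋯+a_m+1)! / (a_1! ⋯ a_m!)) · ∑_{h=0}^{n-1} ∏_{i=1}^m C(h, a_i) is divisible by n, where C(h, a) denotes the binomial coefficient. -/

import Mathlib

open Polynomial Finset

/-- The q-integer `[n]_q = 1 + q + ⋯ + q^{n-1}` as a polynomial in `ℤ[q]`. -/
noncomputable def qint (n : ℕ) : Polynomial ℤ := ∑ i ∈ Finset.range n, X ^ i

/-- The q-factorial `[n]_q! = [n]_q [n-1]_q ⋯ [1]_q`. -/
noncomputable def qfact : ℕ → Polynomial ℤ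
  | 0 => 1
  | n + 1 => qint (n + 1) * qfact n

/-- The Gaussian (q-)binomial coefficient `[n choose k]_q` as a polynomial in `ℤ[q]`,
defined by the q-Pascal recurrence; it equals `∏_{i=1}^k (1-q^{n-i+1})/(1-q^i)` for
`0 ≤ k ≤ n` and `0` otherwise. -/
noncomputable def qbinom : ℕ → ℕ → Polynomial ℤ
  | _, 0 => 1
  | 0, _ + 1 => 0
  | n + 1, k + 1 => qbinom n k + X ^ (k + 1) * qbinom n (k + 1)


lemma hockey (n k : ℕ) : ∑ h ∈ range n, h.choose k = n.choose (k+1) := by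
  induction n with
  | zero => simp
  | succ n ih => rw [Finset.sum_range_succ, ih, Nat.choose_succ_succ']; omega

lemma trinomial (h x k : ℕ) (hxk : x ≤ k) :
    h.choose k * k.choose x = h.choose x * (h - x).choose (k - x) := by
  rcases le_or_gt k h with hkh | hkh
  · have h1 := Nat.choose_mul_factorial_mul_factorial hkh
    have h2 := Nat.choose_mul_factorial_mul_factorial hxk
    have h3 := Nat.choose_mul_factorial_mul_factorial (le_trans hxk hkh)
    have h5 := Nat.choose_mul_factorial_mul_factorial (Nat.sub_le_sub_right hkh x)
    have h4 : (h - x) - (k - x) = h - k := by omega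
    rw [h4] at h5
    have key : h.choose k * k.choose x * (x.factorial * ((k-x).factorial * (h-k).factorial))
        = h.choose x * (h - x).choose (k - x) * (x.factorial * ((k-x).factorial * (h-k).factorial)) := by
      zify at h1 h2 h3 h5 ⊢
      linear_combination (↑(h.choose k) * ((h-k).factorial:ℤ)) * h2 + h1
        - (↑(h.choose x) * ((x).factorial:ℤ)) * h5 - h3
    exact Nat.eq_of_mul_eq_mul_right (by positivity) key
  · rw [Nat.choose_eq_zero_of_lt hkh]
    rcases le_or_gt x h with hxh | hxh
    · rw [Nat.choose_eq_zero_of_lt (show h - x < k - x by omega)]; ring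
    · rw [Nat.choose_eq_zero_of_lt hxh]; ring

lemma vandermonde_range (p q y : ℕ) :
    ∑ j ∈ range (y+1), p.choose j * q.choose (y-j) = (p+q).choose y := by
  rw [Nat.add_choose_eq, Finset.Nat.sum_antidiagonal_eq_sum_range_succ_mk]

lemma core (h x y : ℕ) :
    h.choose x * h.choose y
      = ∑ k ∈ range (x+y+1), k.choose x * x.choose (x+y-k) * h.choose k := by
  have hzero : ∀ k ∈ Ico 0 x, k.choose x * x.choose (x+y-k) * h.choose k = 0 := by
    intro k hk
    rw [Nat.choose_eq_zero_of_lt (by simpa using hk)]; ring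
  rw [range_eq_Ico, ← Finset.sum_Ico_consecutive _ (Nat.zero_le x) (by omega : x ≤ x+y+1),
    Finset.sum_eq_zero hzero, zero_add, Finset.sum_Ico_eq_sum_range]
  have hyy : x + y + 1 - x = y + 1 := by omega
  rw [hyy]
  have hterm : ∀ j ∈ range (y+1),
      (x+j).choose x * x.choose (x+y-(x+j)) * h.choose (x+j)
        = h.choose x * ((h-x).choose j * x.choose (y-j)) := by
    intro j hj
    have h1 : x + y - (x + j) = y - j := by omega
    have h2 : h.choose (x+j) * (x+j).choose x = h.choose x * (h-x).choose j := by
      have := _root_.trinomial h x (x+j) (by omega)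
      simpa using this
    rw [h1]
    calc (x+j).choose x * x.choose (y-j) * h.choose (x+j)
        = (h.choose (x+j) * (x+j).choose x) * x.choose (y-j) := by ring
      _ = h.choose x * ((h-x).choose j * x.choose (y-j)) := by rw [h2]; ring
  rw [Finset.sum_congr rfl hterm, ← Finset.mul_sum, vandermonde_range]
  rcases le_or_gt x h with hxh | hxh
  · rw [Nat.sub_add_cancel hxh]
  · rw [Nat.choose_eq_zero_of_lt hxh]; ring

lemma star (s' x y k : ℕ) (hk : k ≤ x + y) :
    (x+y+s'+1).factorial * (k.choose x * x.choose (x+y-k)) * k.factorial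
      = k.choose x * k.choose y * (x+y+s'+1).choose (x+y-k)
        * (x.factorial * y.factorial * (s'+k+1).factorial) := by
  rcases le_or_gt y k with hyk | hyk
  · have hr1 : x + y - k ≤ x := by omega
    have key : (x+y+s'+1).factorial * x.choose (x+y-k) * k.factorial
        = k.choose y * (x+y+s'+1).choose (x+y-k)
          * (x.factorial * y.factorial * (s'+k+1).factorial) := by
      have f1 := Nat.choose_mul_factorial_mul_factorial hr1
      have f2 := Nat.choose_mul_factorial_mul_factorial hyk
      have f3 := Nat.choose_mul_factorial_mul_factorial
        (show x+y-k ≤ x+y+s'+1 by omega)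
      have e1 : x - (x+y-k) = k - y := by omega
      have e2 : x+y+s'+1 - (x+y-k) = s'+k+1 := by omega
      rw [e1] at f1
      rw [e2] at f3
      have key2 : (x+y+s'+1).factorial * x.choose (x+y-k) * k.factorial
            * ((x+y-k).factorial * (k-y).factorial)
          = k.choose y * (x+y+s'+1).choose (x+y-k)
            * (x.factorial * y.factorial * (s'+k+1).factorial)
            * ((x+y-k).factorial * (k-y).factorial) := by
        zify at f1 f2 f3 ⊢
        linear_combination ((x+y+s'+1).factorial : ℤ) * k.factorial * f1
          - ((x.factorial : ℤ) * ((x+y+s'+1).factorial : ℤ)) * f2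
          - ((k.choose y : ℤ) * (x.factorial:ℤ) * (y.factorial:ℤ) * ((k-y).factorial:ℤ)) * f3
      exact Nat.eq_of_mul_eq_mul_right (by positivity) key2
    calc (x+y+s'+1).factorial * (k.choose x * x.choose (x+y-k)) * k.factorial
        = k.choose x * ((x+y+s'+1).factorial * x.choose (x+y-k) * k.factorial) := by ring
      _ = k.choose x * (k.choose y * (x+y+s'+1).choose (x+y-k)
            * (x.factorial * y.factorial * (s'+k+1).factorial)) := by rw [key]
      _ = _ := by ring
  · rw [Nat.choose_eq_zero_of_lt hyk, Nat.choose_eq_zero_of_lt (show x < x+y-k by omega)]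
    ring
lemma main (m : ℕ) : ∀ (n : ℕ) (a : Fin (m+1) → ℕ),
    n * (∏ i, (a i).factorial)
      ∣ ((∑ i, a i) + 1).factorial * ∑ h ∈ range n, ∏ i, h.choose (a i) := by
  induction m with
  | zero =>
    intro n a
    simp only [Fin.sum_univ_succ, Fin.prod_univ_succ, Fin.sum_univ_zero,
      Fin.prod_univ_zero, mul_one, add_zero]
    rw [hockey]
    rcases n with _ | n
    · simp
    · have h1 := Nat.add_one_mul_choose_eq n (a 0)
      refine ⟨n.choose (a 0), ?_⟩
      rw [Nat.factorial_succ]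
      calc (a 0 + 1) * (a 0).factorial * (n+1).choose (a 0 + 1)
          = ((n+1).choose (a 0 + 1) * (a 0 + 1)) * (a 0).factorial := by ring
        _ = ((n+1) * n.choose (a 0)) * (a 0).factorial := by
            rw [← h1]
        _ = (n+1) * (a 0).factorial * n.choose (a 0) := by ring
  | succ m ih =>
    intro n a
    set X := a 0 with hX
    set Y := a 1 with hY
    set z : Fin m → ℕ := fun i => a i.succ.succ with hz
    set s' := ∑ i, z i with hs'
    set P := ∏ i, (z i).factorial with hP
    set Pc : ℕ → ℕ := fun h => ∏ i, h.choose (z i) with hPc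
    have hsum : (∑ i, a i) = X + Y + s' := by
      rw [Fin.sum_univ_succ, Fin.sum_univ_succ]; simp [hz, hs', add_assoc]; rfl
    have hprod : (∏ i, (a i).factorial) = X.factorial * (Y.factorial * P) := by
      rw [Fin.prod_univ_succ, Fin.prod_univ_succ]; simp [hz, hP]; rfl
    have hch : ∀ h : ℕ, (∏ i, h.choose (a i)) = h.choose X * h.choose Y * Pc h := by
      intro h
      rw [Fin.prod_univ_succ, Fin.prod_univ_succ]; exact (mul_assoc _ _ _).symm
    rw [hsum, hprod]
    have expand : ((X + Y + s') + 1).factorial * ∑ h ∈ range n, ∏ i, h.choose (a i)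
        = ∑ k ∈ range (X+Y+1),
            ((X+Y+s'+1).factorial * (k.choose X * X.choose (X+Y-k)))
              * ∑ h ∈ range n, h.choose k * Pc h := by
      rw [Finset.mul_sum]
      have hterm : ∀ h ∈ range n,
          (X+Y+s'+1).factorial * ∏ i, h.choose (a i)
            = ∑ k ∈ range (X+Y+1),
                ((X+Y+s'+1).factorial * (k.choose X * X.choose (X+Y-k))) * (h.choose k * Pc h) := by
        intro h _
        rw [hch h, core h X Y, Finset.sum_mul, Finset.mul_sum]
        exact Finset.sum_congr rfl fun k _ => by ring
      rw [Finset.sum_congr rfl hterm, Finset.sum_comm]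
      exact Finset.sum_congr rfl fun k _ => by rw [Finset.mul_sum]
    rw [expand]
    apply Finset.dvd_sum
    intro k hk
    have hkle : k ≤ X + Y := by simpa using Nat.lt_succ_iff.mp (mem_range.mp hk)
    set w : Fin (m+1) → ℕ := Fin.cons k z with hw
    have hIH := ih n w
    have hIHsum : (∑ i, w i) = k + s' := by
      rw [Fin.sum_univ_succ]; simp [hw, hs']
    have hIHprod : (∏ i, (w i).factorial) = k.factorial * P := by
      rw [Fin.prod_univ_succ]; simp [hw, hP]
    have hIHch : ∀ h : ℕ, (∏ i, h.choose (w i)) = h.choose k * Pc h := by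
      intro h; rw [Fin.prod_univ_succ]; simp [hw, hPc]
    rw [hIHsum, hIHprod] at hIH
    simp only [hIHch] at hIH
    obtain ⟨q, hq⟩ := hIH
    set S' := ∑ h ∈ range n, h.choose k * Pc h with hS'
    rw [← mul_dvd_mul_iff_right (Nat.factorial_pos k).ne']
    have keyeq : ((X+Y+s'+1).factorial * (k.choose X * X.choose (X+Y-k))) * S' * k.factorial
        = n * (X.factorial * (Y.factorial * P)) * k.factorial
          * ((k.choose X * k.choose Y * (X+Y+s'+1).choose (X+Y-k)) * q) := by
      calc ((X+Y+s'+1).factorial * (k.choose X * X.choose (X+Y-k))) * S' * k.factorial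
          = ((X+Y+s'+1).factorial * (k.choose X * X.choose (X+Y-k)) * k.factorial) * S' := by ring
        _ = (k.choose X * k.choose Y * (X+Y+s'+1).choose (X+Y-k)
              * (X.factorial * Y.factorial * (s'+k+1).factorial)) * S' := by rw [star s' X Y k hkle]
        _ = (k.choose X * k.choose Y * (X+Y+s'+1).choose (X+Y-k))
              * (X.factorial * Y.factorial) * ((k + s' + 1).factorial * S') := by
            have : s' + k + 1 = k + s' + 1 := by omega
            rw [this]; ring
        _ = (k.choose X * k.choose Y * (X+Y+s'+1).choose (X+Y-k))
              * (X.factorial * Y.factorial) * (n * (k.factorial * P) * q) := by rw [hq]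
        _ = _ := by ring
    exact ⟨(k.choose X * k.choose Y * (X+Y+s'+1).choose (X+Y-k)) * q, keyeq⟩

/-- `n` divides `((a_1+⋯+a_m+1)!/(a_1!⋯a_m!)) ∑_{h<n} ∏ C(h,a_i)`. -/
theorem stmt2 (m n : ℕ) (hm : 1 ≤ m) (hn : 1 ≤ n) (a : Fin m → ℕ) :
    n ∣ ((∑ i, a i + 1).factorial / ∏ i, (a i).factorial) *
        ∑ h ∈ Finset.range n, ∏ i, h.choose (a i) := by
  obtain ⟨m', rfl⟩ : ∃ m', m = m' + 1 := ⟨m - 1, by omega⟩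
  set P := ∏ i, (a i).factorial with hPdef
  set Sm := ∑ h ∈ Finset.range n, ∏ i, h.choose (a i) with hSm
  have hP0 : P ≠ 0 := by
    positivity
  have hPd : P ∣ ((∑ i, a i) + 1).factorial := by
    refine dvd_trans (Nat.prod_factorial_dvd_factorial_sum _ _) ?_
    exact Nat.factorial_dvd_factorial (by omega)
  have key : n * P ∣ ((∑ i, a i) + 1).factorial * Sm := main m' n a
  have heq : ((∑ i, a i) + 1).factorial * Sm
      = (((∑ i, a i) + 1).factorial / P * Sm) * P := by
    rw [mul_comm _ P, ← mul_assoc, Nat.mul_div_cancel' hPd]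
  rw [heq] at key
  exact (mul_dvd_mul_iff_right hP0).mp key
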